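/- Let u be a smooth complex-valued function on a Riemannian manifold and \u03c9 a smooth real 1-form with \u03c6_\u03c9 = s/\u03c3 where \u2207s = \u03c3\u2207\u03c6_\u03c9 + 2\u03c0i \u03c3 \u03c6_\u03c9 \u03c9 (i.e., \u2207\u03c3 = 2\u03c0i\u03c3\u03c9). If 2\u03c0\u03c6_\u03c9\u03c9 - i(\u03c6\u2080\u2207\u03c6_\u03c9 - \u03c6_\u03c9\u2207\u03c6\u2080)/\u03c6\u2080 = 0 on a domain where \u03c6\u2080 > 0, then \u03c6\u2080\u2207s = s\u2207\u03c6\u2080, and hence s = c\u03c6\u2080 for a constant c on each connected component. -/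

import Mathlib

open scoped Real

/-- Auxiliary: a function with zero Fréchet derivative on an open connected set is constant. -/
lemma const_of_hasFDerivAt_zero_on {E : Type*} [NormedAddCommGroup E] [NormedSpace ℝ E]
    {Ω : Set E} (hΩo : IsOpen Ω) (hΩc : IsConnected Ω) {g : E → ℂ}
    (hd : ∀ x ∈ Ω, HasFDerivAt g (0 : E →L[ℝ] ℂ) x) :
    ∀ x ∈ Ω, ∀ y ∈ Ω, g x = g y := by
  haveI : PreconnectedSpace Ω := Subtype.preconnectedSpace hΩc.isPreconnected
  have hlc : IsLocallyConstant (fun z : Ω => g z) := by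
    rw [IsLocallyConstant.iff_exists_open]
    rintro ⟨x, hx⟩
    obtain ⟨ε, hε, hball⟩ := Metric.isOpen_iff.1 hΩo x hx
    refine ⟨Subtype.val ⁻¹' Metric.ball x ε,
      (Metric.isOpen_ball).preimage continuous_subtype_val, Metric.mem_ball_self hε, ?_⟩
    rintro ⟨y, hy⟩ hyb
    exact (convex_ball x ε).is_const_of_fderivWithin_eq_zero
      (fun z hz => (hd z (hball hz)).differentiableAt.differentiableWithinAt)
      (fun z hz => by
        rw [fderivWithin_of_isOpen Metric.isOpen_ball hz]
        exact (hd z (hball hz)).fderiv) hyb (Metric.mem_ball_self hε)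
  intro x hx y hy
  exact hlc.apply_eq_of_preconnectedSpace ⟨x, hx⟩ ⟨y, hy⟩

/-- rigidity step in the uniqueness of the minimizer of the principal
eigenvalue. With φ_ω = s/σ, ∇σ = 2πiσω (so ∇s = σ∇φ_ω + 2πiσφ_ω ω), if
2πφ_ω ω − i(φ₀∇φ_ω − φ_ω∇φ₀)/φ₀ = 0 on a connected open set where φ₀ > 0, then
φ₀∇s = s∇φ₀, and hence s = c·φ₀ for some constant c. -/
theorem stmt_6 {E : Type*} [NormedAddCommGroup E] [NormedSpace ℝ E]
    (Ω : Set E) (hΩo : IsOpen Ω) (hΩc : IsConnected Ω)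
    (φ₀ : E → ℝ) (s σ φω : E → ℂ) (ω : E → (E →L[ℝ] ℝ))
    (hφ₀pos : ∀ x ∈ Ω, 0 < φ₀ x)
    (hφ₀d : ∀ x ∈ Ω, DifferentiableAt ℝ (fun y => (φ₀ y : ℂ)) x)
    (hsd : ∀ x ∈ Ω, DifferentiableAt ℝ s x)
    (hφωd : ∀ x ∈ Ω, DifferentiableAt ℝ φω x)
    (hσ0 : ∀ x ∈ Ω, σ x ≠ 0)
    (hφω : ∀ x ∈ Ω, φω x = s x / σ x)
    (hds : ∀ x ∈ Ω, fderiv ℝ s x =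
      σ x • fderiv ℝ φω x +
        (2 * (π : ℂ) * Complex.I * σ x * φω x) • (Complex.ofRealCLM.comp (ω x)))
    (heig : ∀ x ∈ Ω,
      (2 * (π : ℂ) * φω x) • (Complex.ofRealCLM.comp (ω x)) -
        (Complex.I / (φ₀ x : ℂ)) •
          ((φ₀ x : ℂ) • fderiv ℝ φω x - φω x • fderiv ℝ (fun y => (φ₀ y : ℂ)) x) = 0) :
    (∀ x ∈ Ω, (φ₀ x : ℂ) • fderiv ℝ s x = s x • fderiv ℝ (fun y => (φ₀ y : ℂ)) x) ∧
    ∃ c : ℂ, ∀ x ∈ Ω, s x = c * (φ₀ x : ℂ) := by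
  have h1 : ∀ x ∈ Ω, (φ₀ x : ℂ) • fderiv ℝ s x = s x • fderiv ℝ (fun y => (φ₀ y : ℂ)) x := by
    intro x hx
    have hσ : σ x ≠ 0 := hσ0 x hx
    have hφ0 : (φ₀ x : ℂ) ≠ 0 := by
      exact_mod_cast (hφ₀pos x hx).ne'
    have hs_eq : s x = σ x * φω x := by
      rw [hφω x hx]; field_simp
    ext v
    have h2 := ContinuousLinearMap.ext_iff.1 (heig x hx) v
    have h3 := ContinuousLinearMap.ext_iff.1 (hds x hx) v
    simp only [ContinuousLinearMap.smul_apply, ContinuousLinearMap.sub_apply,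
      ContinuousLinearMap.add_apply, ContinuousLinearMap.comp_apply,
      ContinuousLinearMap.zero_apply, Complex.ofRealCLM_apply, smul_eq_mul] at h2 h3 ⊢
    field_simp at h2
    have hI : (Complex.I : ℂ) ^ 2 = -1 := Complex.I_sq
    linear_combination (φ₀ x : ℂ) * h3 + Complex.I * σ x * h2 +
      (σ x * (φ₀ x : ℂ) * ((fderiv ℝ φω x) v) -
        σ x * φω x * ((fderiv ℝ (fun y => (φ₀ y : ℂ)) x) v)) * hI -
      ((fderiv ℝ (fun y => (φ₀ y : ℂ)) x) v) * hs_eq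
  refine ⟨h1, ?_⟩
  set g : E → ℂ := fun y => s y * ((φ₀ y : ℂ))⁻¹ with hg
  have hg0 : ∀ x ∈ Ω, HasFDerivAt g (0 : E →L[ℝ] ℂ) x := by
    intro x hx
    have hφ0 : (φ₀ x : ℂ) ≠ 0 := by exact_mod_cast (hφ₀pos x hx).ne'
    have hD := (hφ₀d x hx).hasFDerivAt
    have hA := (hsd x hx).hasFDerivAt
    have hinv : HasFDerivAt (fun y => ((φ₀ y : ℂ))⁻¹)
        ((-ContinuousLinearMap.mulLeftRight ℝ ℂ ((φ₀ x : ℂ))⁻¹ ((φ₀ x : ℂ))⁻¹).comp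
          (fderiv ℝ (fun y => (φ₀ y : ℂ)) x)) x :=
      (hasFDerivAt_inv' hφ0).comp x hD
    have := hA.smul hinv
    convert this using 1
    · exact rfl
    · exact rfl
    ext v
    have h1v := ContinuousLinearMap.ext_iff.1 (h1 x hx) v
    simp only [ContinuousLinearMap.smul_apply, smul_eq_mul] at h1v
    simp only [ContinuousLinearMap.zero_apply, ContinuousLinearMap.add_apply,
      ContinuousLinearMap.smul_apply, ContinuousLinearMap.comp_apply,
      ContinuousLinearMap.neg_apply, ContinuousLinearMap.mulLeftRight_apply,
      ContinuousLinearMap.smulRight_apply, smul_eq_mul]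
    field_simp
    linear_combination (-1 : ℂ) * h1v
  obtain ⟨x₀, hx₀⟩ := hΩc.nonempty
  refine ⟨g x₀, fun x hx => ?_⟩
  have hφ0 : (φ₀ x : ℂ) ≠ 0 := by exact_mod_cast (hφ₀pos x hx).ne'
  have := const_of_hasFDerivAt_zero_on hΩo hΩc hg0 x hx x₀ hx₀
  rw [← this, hg]
  field_simp
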